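/- Let m ∈ [N−1] and x = m+1 (an unbarred letter). For a weak composition α = (a, a) (two equal parts) and flags (m̄, m̄), the noncommutative column-flagged super Schur function satisfies J_{(a,a)}(m̄ |x| m̄) = x · J_{(a,a)}(m̄, m̄) in U/I_Kron, where J_{(a,a)}(m̄ |x| m̄) = Σ_{π ∈ S_2} sgn(π) e_{a+π(1)−1}(A_{≤m̄}) · x · e_{a+π(2)−2}(A_{≤m̄}) and J_{(a,a)}(m̄, m̄) is the same sum without the inserted letter x. -/

import Mathlib

open scoped BigOperators
open Classical

noncomputable section

namespace NCS

/-- A colored letter: an element of `Fin N` together with a `Bool` which is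
`true` for barred letters and `false` for unbarred letters. -/
abbrev Letter (N : ℕ) := Fin N × Bool

variable {N : ℕ}

/-- The key of the natural order `1 < 1̄ < 2 < 2̄ < ⋯ < N < N̄`. -/
def natKey (x : Letter N) : ℕ := 2 * x.1.val + (if x.2 then 1 else 0)

/-- The key of the big bar order `1 ≺ ⋯ ≺ N ≺ 1̄ ≺ ⋯ ≺ N̄`. -/
def barKey (N : ℕ) (x : Letter N) : ℕ := if x.2 then N + x.1.val else x.1.val

/-- A shuffle order on the alphabet, encoded by an injective key function which is
increasing on unbarred letters and on barred letters. -/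
def IsShuffleKey (key : Letter N → ℕ) : Prop :=
  Function.Injective key ∧
  (∀ a b : Fin N, a < b → key (a, false) < key (b, false)) ∧
  (∀ a b : Fin N, a < b → key (a, true) < key (b, true))

/-- The free associative `ℤ`-algebra on the alphabet. -/
abbrev FA (N : ℕ) := MonoidAlgebra ℤ (FreeMonoid (Letter N))

/-- The monomial of a colored word. -/
def wrd (w : List (Letter N)) : FA N := MonoidAlgebra.single (FreeMonoid.ofList w) 1

/-- `y ≥' x` : `y > x`, or `y` and `x` are equal barred letters. -/
def colGE (key : Letter N → ℕ) (y x : Letter N) : Prop :=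
  key x < key y ∨ (y = x ∧ y.2 = true)

/-- `y ≤'' z` : `y < z`, or `y` and `z` are equal unbarred letters. -/
def rowLE (key : Letter N → ℕ) (y z : Letter N) : Prop :=
  key y < key z ∨ (y = z ∧ y.2 = false)

/-- `x ≤col y` : `x < y`, or `x` and `y` are equal barred letters. -/
def colLE (key : Letter N → ℕ) (x y : Letter N) : Prop :=
  key x < key y ∨ (x = y ∧ x.2 = true)

/-- The noncommutative super elementary symmetric function `e_k(S)` with letters
restricted to the set `S`. -/
def eSet (key : Letter N → ℕ) (S : Set (Letter N)) (k : ℕ) : FA N :=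
  ∑ f ∈ (Finset.univ : Finset (Fin k → Letter N)).filter
      (fun f => (∀ i, f i ∈ S) ∧ ∀ i j : Fin k, (j : ℕ) = (i : ℕ) + 1 → colGE key (f i) (f j)),
    wrd (List.ofFn f)

/-- The noncommutative super elementary symmetric function `e_k(u)`. -/
def eU (key : Letter N → ℕ) (k : ℕ) : FA N := eSet key Set.univ k

/-- `e_k(u)` with integer index; `0` for negative `k`. -/
def eZ (key : Letter N → ℕ) (k : ℤ) : FA N := if 0 ≤ k then eU key k.toNat else 0

/-- `e_k(S)` with integer index; `0` for negative `k`. -/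
def eSetZ (key : Letter N → ℕ) (S : Set (Letter N)) (k : ℤ) : FA N :=
  if 0 ≤ k then eSet key S k.toNat else 0

/-- The noncommutative super homogeneous symmetric function `h_k(u)`. -/
def hU (key : Letter N → ℕ) (k : ℕ) : FA N :=
  ∑ f ∈ (Finset.univ : Finset (Fin k → Letter N)).filter
      (fun f => ∀ i j : Fin k, (j : ℕ) = (i : ℕ) + 1 → rowLE key (f i) (f j)),
    wrd (List.ofFn f)

/-- The relations generating the two-sided ideal `I_Kron` (with respect to the
natural order; recall `natKey x + 1 = natKey y` says `x = y↓`). -/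
inductive kronRel (N : ℕ) : FA N → FA N → Prop
  | rel3 (x y : Letter N) (hy : y.2 = false) (h : natKey x < natKey y) :
      kronRel N (wrd [y, y, x]) (wrd [y, x, y])
  | rel3b (y z : Letter N) (hy : y.2 = false) (h : natKey y < natKey z) :
      kronRel N (wrd [z, y, y]) (wrd [y, z, y])
  | rel4 (y z : Letter N) (hy : y.2 = true) (h : natKey y < natKey z) :
      kronRel N (wrd [y, y, z]) (wrd [y, z, y])
  | rel4b (x y : Letter N) (hy : y.2 = true) (h : natKey x < natKey y) :
      kronRel N (wrd [x, y, y]) (wrd [y, x, y])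
  | rot (x y z : Letter N) (h1 : natKey x + 1 = natKey y) (h2 : natKey y + 1 = natKey z) :
      kronRel N (wrd [x, z, y] - wrd [z, x, y]) (wrd [y, x, z] - wrd [y, z, x])
  | far (x z : Letter N) (h : natKey x + 2 < natKey z) :
      kronRel N (wrd [x, z]) (wrd [z, x])

/-- The relations generating the ⋖-colored plactic ideal `I_plac^⋖`. -/
inductive placRel (N : ℕ) (key : Letter N → ℕ) : FA N → FA N → Prop
  | k1 (x y z : Letter N) (h1 : key x < key y) (h2 : key y < key z) :
      placRel N key (wrd [x, z, y]) (wrd [z, x, y])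
  | k2 (x y z : Letter N) (h1 : key x < key y) (h2 : key y < key z) :
      placRel N key (wrd [y, x, z]) (wrd [y, z, x])
  | k3 (x y : Letter N) (hy : y.2 = false) (h : key x < key y) :
      placRel N key (wrd [y, y, x]) (wrd [y, x, y])
  | k3b (y z : Letter N) (hy : y.2 = false) (h : key y < key z) :
      placRel N key (wrd [z, y, y]) (wrd [y, z, y])
  | k4 (y z : Letter N) (hy : y.2 = true) (h : key y < key z) :
      placRel N key (wrd [y, y, z]) (wrd [y, z, y])
  | k4b (x y : Letter N) (hy : y.2 = true) (h : key x < key y) :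
      placRel N key (wrd [x, y, y]) (wrd [y, x, y])

/-- The relations generating the ideal `I_kronknuth`. -/
inductive kkRel (N : ℕ) : FA N → FA N → Prop
  | rel3 (x y : Letter N) (hy : y.2 = false) (h : natKey x < natKey y) :
      kkRel N (wrd [y, y, x]) (wrd [y, x, y])
  | rel3b (y z : Letter N) (hy : y.2 = false) (h : natKey y < natKey z) :
      kkRel N (wrd [z, y, y]) (wrd [y, z, y])
  | rel4 (y z : Letter N) (hy : y.2 = true) (h : natKey y < natKey z) :
      kkRel N (wrd [y, y, z]) (wrd [y, z, y])
  | rel4b (x y : Letter N) (hy : y.2 = true) (h : natKey x < natKey y) :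
      kkRel N (wrd [x, y, y]) (wrd [y, x, y])
  | rot (x y z : Letter N) (h1 : natKey x + 1 = natKey y) (h2 : natKey y + 1 = natKey z) :
      kkRel N (wrd [x, z, y] - wrd [z, x, y]) (wrd [y, x, z] - wrd [y, z, x])
  | kk1 (x y z : Letter N) (h1 : natKey x < natKey y) (h2 : natKey y < natKey z)
      (h3 : natKey x + 2 < natKey z) :
      kkRel N (wrd [x, z, y]) (wrd [z, x, y])
  | kk2 (x y z : Letter N) (h1 : natKey x < natKey y) (h2 : natKey y < natKey z)
      (h3 : natKey x + 2 < natKey z) :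
      kkRel N (wrd [y, x, z]) (wrd [y, z, x])

end NCS
namespace NCS

variable {N : ℕ}

/-- The ordinary word `w^r`: barred letters shuffled to the right, that subword
reversed and de-barred.  Letters are recorded `1`-indexed. -/
def plainr (w : List (Letter N)) : List ℕ :=
  (w.filter (fun x => !x.2)).map (fun x => x.1.val + 1) ++
    ((w.filter (fun x => x.2)).reverse).map (fun x => x.1.val + 1)

/-- The number of barred letters of a colored word. -/
def barredCount (w : List (Letter N)) : ℕ := (w.filter (fun x => x.2)).length

/-- An ordinary word (in the `1`-indexed alphabet) is Yamanouchi of content `lam`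
(`lam i` = multiplicity of the letter `i+1`). -/
def IsYamOf (lam : ℕ → ℕ) (u : List ℕ) : Prop :=
  (∀ i : ℕ, u.count (i + 1) = lam i) ∧
    ∀ t i : ℕ, (u.drop t).count (i + 2) ≤ (u.drop t).count (i + 1)

/-- An ordinary word is Yamanouchi (of some content). -/
def IsYamWord (u : List ℕ) : Prop :=
  ∀ t i : ℕ, (u.drop t).count (i + 2) ≤ (u.drop t).count (i + 1)

/-- The set of colored Yamanouchi words of content `lam` with exactly `d` barred letters. -/
def CYW (N : ℕ) (lam : ℕ → ℕ) (d : ℕ) : Set (List (Letter N)) :=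
  {w | IsYamOf lam (plainr w) ∧ barredCount w = d}

/-- `CYW` as a finset (all its members have length `n = Σ lam`). -/
def CYWfin (N : ℕ) (lam : ℕ → ℕ) (d n : ℕ) : Finset (List (Letter N)) :=
  ((Finset.univ : Finset (Fin n → Letter N)).image List.ofFn).filter
    (fun w => w ∈ CYW N lam d)

/-- A set of colored words is shuffle closed. -/
def ShuffleClosed (W : Set (List (Letter N))) : Prop :=
  ∀ (u v : List (Letter N)) (x y : Letter N), x.2 ≠ y.2 →
    (u ++ x :: y :: v) ∈ W → (u ++ y :: x :: v) ∈ W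

/-- The ⋖-descent set of a colored word (`0`-indexed positions). -/
def DesSet (key : Letter N → ℕ) (w : List (Letter N)) : Set ℕ :=
  {i | ∃ h : i + 1 < w.length,
    key (w.get ⟨i + 1, h⟩) < key (w.get ⟨i, Nat.lt_of_succ_lt h⟩) ∨
      (w.get ⟨i, Nat.lt_of_succ_lt h⟩ = w.get ⟨i + 1, h⟩ ∧ (w.get ⟨i + 1, h⟩).2 = true)}

/-- Coefficient of the monomial `m` in Gessel's fundamental quasisymmetric
function `Q_S` for words of length `t`. -/
def Qcoeff (t : ℕ) (S : Set ℕ) (m : ℕ →₀ ℕ) : ℤ :=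
  Nat.card {i : Fin t → ℕ //
    (∀ j k : Fin t, j ≤ k → i j ≤ i k) ∧
    (∀ j k : Fin t, (k : ℕ) = (j : ℕ) + 1 → (j : ℕ) ∈ S → i j < i k) ∧
    (∀ v : ℕ, m v = (Finset.univ.filter (fun j : Fin t => i j = v)).card)}

/-- Gessel's fundamental quasisymmetric function as a power series in the
variables `x_0, x_1, …`. -/
def Qqs (t : ℕ) (S : Set ℕ) : MvPowerSeries ℕ ℤ := fun m => Qcoeff t S m

/-- The boxes of the (possibly restricted) shape with column lengths bounded by
`rows` and row lengths given by `nu`. -/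
def shapeFin (nu : ℕ → ℕ) (rows : ℕ) : Finset (ℕ × ℕ) :=
  (Finset.range rows ×ˢ Finset.range (nu 0)).filter (fun p => p.2 < nu p.1)

/-- `E` is a ⋖-colored tableau of shape `nu` (rows weakly increase with equal
letters unbarred; columns weakly increase with equal letters barred). -/
def IsCT (key : Letter N → ℕ) (nu : ℕ → ℕ) (E : ℕ × ℕ → Letter N) : Prop :=
  (∀ r c : ℕ, c + 1 < nu r → rowLE key (E (r, c)) (E (r, c + 1))) ∧
  (∀ r c : ℕ, c < nu (r + 1) → colLE key (E (r, c)) (E (r + 1, c)))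

/-- Pad a partition given on `Fin n` to a function on `ℕ`. -/
def padF {n : ℕ} (f : Fin n → ℕ) : ℕ → ℕ := fun i => if h : i < n then f ⟨i, h⟩ else 0

/-- Extend a filling of the shape to all of `ℕ × ℕ` by a junk letter. -/
def extT (nu : ℕ → ℕ) (rows : ℕ) (junk : Letter N)
    (T : {p : ℕ × ℕ // p ∈ shapeFin nu rows} → Letter N) : ℕ × ℕ → Letter N :=
  fun p => if h : p ∈ shapeFin nu rows then T ⟨p, h⟩ else junk

/-- The reading word `sqread`: diagonals from southwest to northeast; on each
diagonal the unbarred entries are read in the ↖ direction followed by the barred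
entries in the ↘ direction. -/
def sqread (nu : ℕ → ℕ) (rows : ℕ) (E : ℕ × ℕ → Letter N) : List (Letter N) :=
  (List.range (rows + nu 0)).flatMap (fun k =>
    let boxes : List (ℕ × ℕ) := (List.range rows).filterMap (fun (r : ℕ) =>
      let c : ℤ := (r : ℤ) + (k : ℤ) - (rows : ℤ) + 1
      if 0 ≤ c ∧ c.toNat < nu r then some (r, c.toNat) else none)
    ((boxes.filter (fun b => !(E b).2)).reverse ++ boxes.filter (fun b => (E b).2)).map E)

/-- The column reading word: columns read bottom to top, leftmost column first. -/
def colword (nu : ℕ → ℕ) (rows : ℕ) (E : ℕ × ℕ → Letter N) : List (Letter N) :=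
  (List.range (nu 0)).flatMap (fun c =>
    ((List.range rows).filter (fun r => decide (c < nu r))).reverse.map (fun r => E (r, c)))

/-- The Kostka number: semistandard Young tableaux of shape `nu` and content `m`
(entries `1`-indexed; entry `i+1` corresponds to the variable `x_i`). -/
def kostka (nu : ℕ → ℕ) (m : ℕ →₀ ℕ) : ℤ :=
  Nat.card {T : ℕ × ℕ → ℕ //
    (∀ r c : ℕ, c + 1 < nu r → T (r, c) ≤ T (r, c + 1)) ∧
    (∀ r c : ℕ, c < nu (r + 1) → T (r, c) < T (r + 1, c)) ∧
    (∀ r c : ℕ, c < nu r → 1 ≤ T (r, c)) ∧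
    (∀ r c : ℕ, ¬ c < nu r → T (r, c) = 0) ∧
    (∀ i : ℕ, (m i : ℕ) = Nat.card {p : ℕ × ℕ // p.2 < nu p.1 ∧ T p = i + 1})}

/-- The parts of a partition of `n`, as a weakly decreasing list. -/
def partList {n : ℕ} (ν : Nat.Partition n) : List ℕ := (ν.parts.sort (· ≤ ·)).reverse

/-- The parts of a partition of `n`, as a function `ℕ → ℕ` (`0`-indexed). -/
def partFun {n : ℕ} (ν : Nat.Partition n) : ℕ → ℕ := fun i => (partList ν).getD i 0

/-- The conjugate partition: `ν'_j = #{i < rows : ν_i ≥ j}`. -/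
def conjP (nu : ℕ → ℕ) (j : ℕ) (rows : ℕ) : ℕ :=
  ((Finset.range rows).filter (fun i => j ≤ nu i)).card

/-- The noncommutative super Schur function
`𝔍_ν(u) = Σ_{π ∈ S_t} sgn(π) e_{ν'_1+π(1)-1}(u) ⋯ e_{ν'_t+π(t)-t}(u)`, `t = ν_1`. -/
def JncF (key : Letter N → ℕ) (nu : ℕ → ℕ) (rows : ℕ) : FA N :=
  ∑ π : Equiv.Perm (Fin (nu 0)),
    (Equiv.Perm.sign π : ℤ) •
      (List.ofFn (fun i : Fin (nu 0) =>
        eZ key ((conjP nu (i.1 + 1) rows : ℤ) + ((π i).1 : ℤ) - (i.1 : ℤ)))).prod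

end NCS
namespace NCS

variable {N : ℕ}

/-- A partition diagram (as a set of `0`-indexed boxes). -/
def IsPartitionDiagram (P : Finset (ℕ × ℕ)) : Prop :=
  ∀ p ∈ P, ∀ q : ℕ × ℕ, q.1 ≤ p.1 → q.2 ≤ p.2 → q ∈ P

/-- `p ≤ q` in the northeast order: `q.1 ≤ p.1` and `p.2 ≤ q.2`. -/
def neLE (p q : ℕ × ℕ) : Prop := q.1 ≤ p.1 ∧ p.2 ≤ q.2

/-- A restricted shape: a lower order ideal of a partition diagram for the
northeast order. -/
def IsRestrictedShape (D : Finset (ℕ × ℕ)) : Prop :=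
  ∃ P : Finset (ℕ × ℕ), IsPartitionDiagram P ∧ D ⊆ P ∧
    ∀ p ∈ P, ∀ q ∈ D, neLE p q → p ∈ D

/-- A restricted colored tableau (for the natural order). -/
structure RCT (N : ℕ) where
  shape : Finset (ℕ × ℕ)
  restricted : IsRestrictedShape shape
  entry : ℕ × ℕ → Letter N
  row : ∀ r c : ℕ, (r, c) ∈ shape → (r, c + 1) ∈ shape →
    natKey (entry (r, c)) < natKey (entry (r, c + 1)) ∨
      (entry (r, c) = entry (r, c + 1) ∧ (entry (r, c)).2 = false)
  col : ∀ r c : ℕ, (r, c) ∈ shape → (r + 1, c) ∈ shape →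
    natKey (entry (r, c)) < natKey (entry (r + 1, c)) ∨
      (entry (r, c) = entry (r + 1, c) ∧ (entry (r, c)).2 = true)

/-- A ↖ arrow of `R` from the box `tail` (containing `a+1`) to the box `head`
(containing `a`); the two boxes are opposite corners of a rectangle whose
intersection with the shape is an arrow subtableau. -/
def nwArrow (R : RCT N) (tail head : ℕ × ℕ) : Prop :=
  head ∈ R.shape ∧ tail ∈ R.shape ∧ head.1 < tail.1 ∧ head.2 < tail.2 ∧
  (∃ a b : Fin N, R.entry head = (a, false) ∧ R.entry tail = (b, false) ∧
    (b : ℕ) = (a : ℕ) + 1) ∧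
  ((tail.1 = head.1 + 1 ∧ tail.2 = head.2 + 1 ∧ (tail.1, head.2) ∈ R.shape) ∨
   (head.1 + 1 < tail.1 ∧
    (∀ p ∈ R.shape, head.1 ≤ p.1 → p.1 ≤ tail.1 → head.2 ≤ p.2 → p.2 ≤ tail.2 →
      p.2 = head.2 ∨ p.1 = tail.1) ∧
    (∀ r : ℕ, head.1 ≤ r → r ≤ tail.1 → (r, head.2) ∈ R.shape) ∧
    (∀ c : ℕ, head.2 ≤ c → c ≤ tail.2 → (tail.1, c) ∈ R.shape)))

/-- A ↘ arrow of `R` from the box `tail` (containing `ā`) to the box `head`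
(containing `(a+1)`-bar). -/
def seArrow (R : RCT N) (tail head : ℕ × ℕ) : Prop :=
  tail ∈ R.shape ∧ head ∈ R.shape ∧ tail.1 < head.1 ∧ tail.2 < head.2 ∧
  (∃ a b : Fin N, R.entry tail = (a, true) ∧ R.entry head = (b, true) ∧
    (b : ℕ) = (a : ℕ) + 1) ∧
  ((head.1 = tail.1 + 1 ∧ head.2 = tail.2 + 1 ∧ (head.1, tail.2) ∈ R.shape) ∨
   (tail.2 + 1 < head.2 ∧
    (∀ p ∈ R.shape, tail.1 ≤ p.1 → p.1 ≤ head.1 → tail.2 ≤ p.2 → p.2 ≤ head.2 →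
      p.2 = tail.2 ∨ p.1 = head.1) ∧
    (∀ r : ℕ, tail.1 ≤ r → r ≤ head.1 → (r, tail.2) ∈ R.shape) ∧
    (∀ c : ℕ, tail.2 ≤ c → c ≤ head.2 → (head.1, c) ∈ R.shape)))

/-- A box is the tail of an arrow of `R`. -/
def IsArrowTail (R : RCT N) (β : ℕ × ℕ) : Prop :=
  (∃ h, nwArrow R β h) ∨ (∃ h, seArrow R β h)

/-- A box which is maximal in `D` for the northeast order. -/
def NEMaximal (D : Finset (ℕ × ℕ)) (β : ℕ × ℕ) : Prop :=
  β ∈ D ∧ ∀ q ∈ D, neLE β q → q = β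

/-- `L` is an arrow respecting reading order of the RCT `R`: an enumeration of
the boxes compatible with the northeast order, reading every arrow tail before
the corresponding head. -/
def IsARWord (R : RCT N) (L : List (ℕ × ℕ)) : Prop :=
  L.Nodup ∧ (∀ β : ℕ × ℕ, β ∈ L ↔ β ∈ R.shape) ∧
  (∀ β β' : ℕ × ℕ, β ∈ L → β' ∈ L → neLE β β' → β ≠ β' →
    L.idxOf β < L.idxOf β') ∧
  (∀ t h : ℕ × ℕ, nwArrow R t h ∨ seArrow R t h → L.idxOf t < L.idxOf h)

end NCS
namespace NCS

variable {N : ℕ}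

/-! ### Word conversion -/

/-- Rotate a list once to the right. -/
def rotR {α : Type*} (l : List α) : List α := l.rotate (l.length - 1)

/-- Word conversion: fix all letters not satisfying `p` and rotate each maximal
consecutive run of letters satisfying `p` once to the right. -/
def conv {α : Type*} (p : α → Bool) : List α → List α
  | [] => []
  | x :: xs =>
    if p x = true then
      rotR ((x :: xs).takeWhile p) ++ conv p (xs.dropWhile p)
    else x :: conv p xs
termination_by l => l.length
decreasing_by
  · exact Nat.lt_succ_of_le ((List.dropWhile_suffix p).length_le)
  · exact Nat.lt_succ_self _

/-! ### Ordinary RSK insertion -/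

/-- Row bumping: insert `x` into a weakly increasing row, bumping the leftmost
entry strictly greater than `x`. -/
def bumpRow : List ℕ → ℕ → List ℕ × Option ℕ
  | [], x => ([x], none)
  | y :: ys, x =>
    if x < y then (x :: ys, some y)
    else
      let p := bumpRow ys x
      (y :: p.1, p.2)

/-- Schensted insertion of a letter into a tableau (given as its list of rows). -/
def insertEntry : List (List ℕ) → ℕ → List (List ℕ)
  | [], x => [[x]]
  | row :: rest, x =>
    match bumpRow row x with
    | (row', none) => row' :: rest
    | (row', some y) => row' :: insertEntry rest y

/-- The insertion tableau of an ordinary word. -/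
def insertionTableau (w : List ℕ) : List (List ℕ) := w.foldl insertEntry []

/-- A tableau (list of rows) is superstandard: row `i` is filled with `i+1`'s
(`1`-indexed letters). -/
def IsSuperstandard (Q : List (List ℕ)) : Prop :=
  ∀ i : ℕ, ∀ h : i < Q.length, ∀ v ∈ Q.get ⟨i, h⟩, v = i + 1

/-! ### Standardization -/

/-- The ⋖-standardization of a colored word: occurrences of each letter are
relabelled, smallest letter first, left to right for unbarred letters and
right to left for barred letters, by `1, 2, …`. -/
def stdz (key : Letter N → ℕ) (w : List (Letter N)) : List ℕ :=
  (List.finRange w.length).map (fun i =>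
    ((List.finRange w.length).filter
        (fun j => decide (key (w.get j) < key (w.get i)))).length +
    (if (w.get i).2 then
        ((List.finRange w.length).filter
          (fun j => decide (i < j ∧ w.get j = w.get i))).length
      else
        ((List.finRange w.length).filter
          (fun j => decide (j < i ∧ w.get j = w.get i))).length) + 1)

/-- The free `ℤ`-algebra on the ordinary (unbarred) alphabet `ℕ`. -/
abbrev FAO := MonoidAlgebra ℤ (FreeMonoid ℕ)

/-- The monomial of an ordinary word. -/
def wrdO (w : List ℕ) : FAO := MonoidAlgebra.single (FreeMonoid.ofList w) 1

/-- The ordinary Knuth (plactic) relations. -/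
inductive knuthRel : FAO → FAO → Prop
  | k1 (a b c : ℕ) (h1 : a < b) (h2 : b < c) : knuthRel (wrdO [a, c, b]) (wrdO [c, a, b])
  | k2 (a b c : ℕ) (h1 : a < b) (h2 : b < c) : knuthRel (wrdO [b, a, c]) (wrdO [b, c, a])
  | k3 (a b : ℕ) (h : a < b) : knuthRel (wrdO [b, b, a]) (wrdO [b, a, b])
  | k4 (b c : ℕ) (h : b < c) : knuthRel (wrdO [c, b, b]) (wrdO [b, c, b])

/-! ### Pairing, the noncommutative Cauchy product, symmetric series -/

/-- The bilinear pairing on `U` for which the colored words are orthonormal. -/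
def pairU (f g : FA N) : ℤ := ∑ w ∈ f.coeff.support, f.coeff w * g.coeff w

/-- Coefficient of `x^m` in the noncommutative Cauchy product
`Ω(x,u) = Π_j (c_{z_1}(x_j) ⋯ c_{z_{2N}}(x_j))`: the product of the `h_{m_j}(u)`
in increasing order of `j`. -/
def OmegaC (key : Letter N → ℕ) (m : ℕ →₀ ℕ) : FA N :=
  ((m.support.sort (· ≤ ·)).map (fun j => hU key (m j))).prod

/-- Total degree of a monomial. -/
def degM (m : ℕ →₀ ℕ) : ℕ := m.sum fun _ k => k

/-- Coefficient of `x^m` in the monomial symmetric function `m_ν`. -/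
def mCoeff {k : ℕ} (ν : Nat.Partition k) (m : ℕ →₀ ℕ) : ℤ :=
  if Multiset.map (fun j => m j) m.support.val = ν.parts then 1 else 0

/-- `h_ν(u) = h_{ν_1}(u) h_{ν_2}(u) ⋯`. -/
def hProd (key : Letter N → ℕ) (L : List ℕ) : FA N := (L.map (hU key)).prod

/-- Coefficient of `x^m` in `F_γ(x) = Σ_w γ_w Q_{Des(w)}(x)`. -/
def FgammaC (key : Letter N → ℕ) (γ : FA N) (m : ℕ →₀ ℕ) : ℤ :=
  ∑ w ∈ γ.coeff.support, γ.coeff w *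
    Qcoeff (FreeMonoid.toList w).length (DesSet key (FreeMonoid.toList w)) m

/-- A series (given by its coefficients) is symmetric. -/
def SymmSeries (F : (ℕ →₀ ℕ) → ℤ) : Prop :=
  ∀ σ : Equiv.Perm ℕ, ∀ m : ℕ →₀ ℕ, F (Finsupp.mapDomain σ m) = F m

/-! ### Characters of symmetric groups and Kronecker coefficients -/

/-- The power sum polynomial `p_k` in `n` variables. -/
def powS (n k : ℕ) : MvPolynomial (Fin n) ℤ := ∑ j : Fin n, MvPolynomial.X j ^ k

/-- The Vandermonde alternant `a_δ = Σ_σ sgn(σ) Π_i x_{σ(i)}^{n-1-i}`. -/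
def aDelta (n : ℕ) : MvPolynomial (Fin n) ℤ :=
  ∑ σ : Equiv.Perm (Fin n),
    (Equiv.Perm.sign σ : ℤ) • ∏ i : Fin n, MvPolynomial.X (σ i) ^ (n - 1 - (i : ℕ))

/-- The irreducible character `χ^λ` of `S_n` evaluated at `σ`, via the Frobenius
character formula: the coefficient of `x^{λ+δ}` in `a_δ · p_{cycleType σ}`. -/
def chi (n : ℕ) (lam : Fin n → ℕ) (σ : Equiv.Perm (Fin n)) : ℤ :=
  MvPolynomial.coeff
    (Finsupp.equivFunOnFinite.symm (fun i : Fin n => lam i + (n - 1 - (i : ℕ))))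
    (aDelta n * (σ.cycleType.map (fun k => powS n k)).prod)

/-- The hook partition `μ(d) = (n-d, 1^d)`, as a function on `Fin n`. -/
def hookP (n d : ℕ) : Fin n → ℕ :=
  fun i => if (i : ℕ) = 0 then n - d else if (i : ℕ) ≤ d then 1 else 0

/-- `n!` times the Kronecker coefficient `g_{λμν}`, via
`g = (1/n!) Σ_σ χ^λ(σ) χ^μ(σ) χ^ν(σ)`. -/
def kronC (n : ℕ) (lam mu nu : Fin n → ℕ) : ℤ :=
  ∑ σ : Equiv.Perm (Fin n), chi n lam σ * chi n mu σ * chi n nu σ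

/-! ### Power series in `s` and `t` over `U/I_kronknuth` -/

/-- The quotient `U/I_kronknuth`. -/
abbrev QKK (N : ℕ) := RingQuot (kkRel N)

/-- The image of a generator in `U/I_kronknuth`. -/
def uQ (x : Letter N) : QKK N := RingQuot.mkRingHom (kkRel N) (wrd [x])

/-- A power series in `s` (variable `0`) only. -/
def serS (c : ℕ → QKK N) : MvPowerSeries (Fin 2) (QKK N) :=
  fun m => if m 1 = 0 then c (m 0) else 0

/-- A power series in `t` (variable `1`) only. -/
def serT (c : ℕ → QKK N) : MvPowerSeries (Fin 2) (QKK N) :=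
  fun m => if m 0 = 0 then c (m 1) else 0

/-- A constant power series. -/
def constSer (a : QKK N) : MvPowerSeries (Fin 2) (QKK N) :=
  fun m => if m = 0 then a else 0

/-- `f_x = 1 + u_x s` (`x` unbarred), `(1 - u_x s)⁻¹ = Σ_k u_x^k s^k` (`x` barred). -/
def fSer (x : Letter N) : MvPowerSeries (Fin 2) (QKK N) :=
  serS (fun k => if x.2 then uQ x ^ k else if k = 0 then 1 else if k = 1 then uQ x else 0)

/-- The inverse of `f_x`. -/
def fSerInv (x : Letter N) : MvPowerSeries (Fin 2) (QKK N) :=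
  serS (fun k => if x.2 then (if k = 0 then 1 else if k = 1 then -uQ x else 0)
    else (-uQ x) ^ k)

/-- `g_z = 1 + u_z t` (`z` unbarred), `(1 - u_z t)⁻¹` (`z` barred). -/
def gSer (z : Letter N) : MvPowerSeries (Fin 2) (QKK N) :=
  serT (fun k => if z.2 then uQ z ^ k else if k = 0 then 1 else if k = 1 then uQ z else 0)

/-- The inverse of `g_z`. -/
def gSerInv (z : Letter N) : MvPowerSeries (Fin 2) (QKK N) :=
  serT (fun k => if z.2 then (if k = 0 then 1 else if k = 1 then -uQ z else 0)
    else (-uQ z) ^ k)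

end NCS
namespace NCS

lemma natKey_lt (x : Letter N) : natKey x < 2 * N := by
  rcases x with ⟨⟨i, hi⟩, b⟩
  simp only [natKey]
  cases b <;> simp <;> omega

lemma natKey_inj {x y : Letter N} (h : natKey x = natKey y) : x = y := by
  rcases x with ⟨⟨i, hi⟩, b⟩; rcases y with ⟨⟨i', hi'⟩, b'⟩
  simp only [natKey] at h
  cases b <;> cases b' <;> simp_all <;> omega

/-- The flag set: letters with key `< j`. -/
def Tset (N : ℕ) (j : ℕ) : Set (Letter N) := {y | natKey y < j}

def Chain (key : Letter N → ℕ) {k : ℕ} (g : Fin k → Letter N) : Prop :=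
  ∀ i j : Fin k, (j : ℕ) = (i : ℕ) + 1 → colGE key (g i) (g j)

lemma wrd_append (u v : List (Letter N)) : wrd (u ++ v) = wrd u * wrd v := by
  unfold wrd
  rw [MonoidAlgebra.single_mul_single, one_mul]; rfl

lemma wrd_nil : wrd ([] : List (Letter N)) = 1 := rfl

lemma wrd_cons (t : Letter N) (l : List (Letter N)) :
    wrd (t :: l) = wrd [t] * wrd l := by
  have : t :: l = [t] ++ l := rfl
  rw [this, wrd_append]

lemma eSet_zero (key : Letter N → ℕ) (S : Set (Letter N)) : eSet key S 0 = 1 := by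
  unfold eSet
  rw [Finset.filter_true_of_mem (fun f _ => ⟨fun i => i.elim0, fun i _ _ => i.elim0⟩)]
  rw [Fintype.sum_unique]
  rfl

lemma chain_cons_iff (key : Letter N → ℕ) {k : ℕ} (t : Letter N) (g : Fin k → Letter N) :
    Chain key (Fin.cons t g) ↔
      (∀ h : 0 < k, colGE key t (g ⟨0, h⟩)) ∧ Chain key g := by
  constructor
  · intro H
    refine ⟨fun h => ?_, fun i j hj => ?_⟩
    · have h1 : (1 : ℕ) < k + 1 := by omega
      have := H 0 ⟨1, h1⟩ (by simp)
      have e1 : (⟨1, h1⟩ : Fin (k+1)) = (⟨0, h⟩ : Fin k).succ := by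
        apply Fin.ext; simp
      rw [e1, Fin.cons_succ, Fin.cons_zero] at this
      exact this
    · have := H i.succ j.succ (by simp [Fin.val_succ]; omega)
      rwa [Fin.cons_succ, Fin.cons_succ] at this
  · rintro ⟨hhead, htail⟩ i j hj
    rcases Fin.eq_zero_or_eq_succ i with hi | ⟨i', rfl⟩
    · subst hi
      have hk : 0 < k := by
        have := j.isLt; omega
      have ej : j = (⟨0, hk⟩ : Fin k).succ := by
        apply Fin.ext; simpa using hj
      rw [ej, Fin.cons_succ, Fin.cons_zero]
      exact hhead hk
    · have hj0 : (j : ℕ) = (i' : ℕ) + 2 := by simpa [Fin.val_succ] using hj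
      have hlt : (i' : ℕ) + 1 < k := by have := j.isLt; omega
      have ej : j = (⟨(i' : ℕ) + 1, hlt⟩ : Fin k).succ := by apply Fin.ext; simp [hj0]
      rw [ej, Fin.cons_succ, Fin.cons_succ]
      exact htail i' _ (by simp)

lemma chain_le_head (key : Letter N → ℕ) {k : ℕ} {g : Fin k → Letter N}
    (hch : Chain key g) (h0 : 0 < k) (i : Fin k) :
    key (g i) ≤ key (g ⟨0, h0⟩) := by
  obtain ⟨iv, hiv⟩ := i
  induction iv with
  | zero => exact le_refl _
  | succ n ih =>
    have hn : n < k := by omega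
    have step := hch ⟨n, hn⟩ ⟨n+1, hiv⟩ rfl
    rcases step with hlt | ⟨heq, _⟩
    · exact le_trans (le_of_lt hlt) (ih hn)
    · rw [← heq]; exact ih hn

lemma eSet_cons (key : Letter N → ℕ) (S : Set (Letter N)) (k : ℕ) :
    eSet key S (k+1) = ∑ t : Letter N, ∑ g : Fin k → Letter N,
      if (t ∈ S ∧ (∀ i, g i ∈ S)) ∧
          ((∀ h : 0 < k, colGE key t (g ⟨0, h⟩)) ∧ Chain key g)
        then wrd (t :: List.ofFn g) else 0 := by
  unfold eSet
  rw [Finset.sum_filter]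
  rw [← (Fin.consEquiv (fun _ => Letter N)).sum_comp
    (fun f => if (∀ i, f i ∈ S) ∧ (∀ i j : Fin (k+1), (j : ℕ) = (i : ℕ) + 1 → colGE key (f i) (f j)) then wrd (List.ofFn f) else 0)]
  rw [Fintype.sum_prod_type]
  refine Finset.sum_congr rfl (fun t _ => Finset.sum_congr rfl (fun g _ => ?_))
  have hc : (Fin.consEquiv (fun _ => Letter N)) (t, g) = Fin.cons t g := rfl
  rw [hc]
  have hmem : (∀ i : Fin (k+1), (Fin.cons t g : Fin (k+1) → Letter N) i ∈ S) ↔ t ∈ S ∧ ∀ i, g i ∈ S := by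
    rw [Fin.forall_fin_succ]
    simp [Fin.cons_zero, Fin.cons_succ]
  have hofn : List.ofFn (Fin.cons t g) = t :: List.ofFn g := by
    rw [List.ofFn_succ]
    simp [Fin.cons_zero, Fin.cons_succ]
  have hch := chain_cons_iff key t g
  rw [hofn]
  congr 1
  rw [eq_iff_iff]
  constructor
  · rintro ⟨a, b⟩; exact ⟨⟨(hmem.1 a).1, (hmem.1 a).2⟩, hch.1 b⟩
  · rintro ⟨⟨a1, a2⟩, b⟩; exact ⟨hmem.2 ⟨a1, a2⟩, hch.2 b⟩


lemma mem_Tset {y : Letter N} {j : ℕ} : y ∈ Tset N j ↔ natKey y < j := Iff.rfl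

lemma eSet_one (key : Letter N → ℕ) (S : Set (Letter N)) :
    eSet key S 1 = ∑ t : Letter N, if t ∈ S then wrd [t] else 0 := by
  rw [eSet_cons]
  refine Finset.sum_congr rfl (fun t _ => ?_)
  rw [Fintype.sum_unique]
  by_cases h : t ∈ S
  · rw [if_pos h,
      if_pos ⟨⟨h, fun i => i.elim0⟩, ⟨fun h' => absurd h' (by omega), fun i j _ => i.elim0⟩⟩]
    simp [List.ofFn_zero]
  · rw [if_neg h, if_neg (fun hC => h hC.1.1)]

lemma eSet_expand (key : Letter N → ℕ) (S : Set (Letter N)) (k : ℕ) :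
    eSet key S k = ∑ g : Fin k → Letter N,
      if (∀ i, g i ∈ S) ∧ Chain key g then wrd (List.ofFn g) else 0 := by
  unfold eSet Chain
  rw [Finset.sum_filter]
  exact Finset.sum_congr rfl (fun g _ => by split_ifs <;> rfl)

lemma eSet_rec (j k : ℕ) (c : Letter N) (hc : natKey c = j) :
    eSet natKey (Tset N (j+1)) (k+1)
      = eSet natKey (Tset N j) (k+1) +
        wrd [c] * eSet natKey (Tset N (if c.2 then j+1 else j)) k := by
  set S' : Set (Letter N) := Tset N (if c.2 then j+1 else j) with hS'
  have hexp : wrd [c] * eSet natKey S' k = ∑ g : Fin k → Letter N,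
      if (∀ i, g i ∈ S') ∧ Chain natKey g then wrd [c] * wrd (List.ofFn g) else 0 := by
    rw [eSet_expand, Finset.mul_sum]
    exact Finset.sum_congr rfl (fun g _ => by rw [mul_ite, mul_zero])
  rw [eSet_cons, eSet_cons, hexp]
  have key_pt : ∀ (t : Letter N) (g : Fin k → Letter N),
      (if ((t ∈ Tset N (j+1)) ∧ (∀ i, g i ∈ Tset N (j+1))) ∧
          ((∀ h : 0 < k, colGE natKey t (g ⟨0,h⟩)) ∧ Chain natKey g)
        then wrd (t :: List.ofFn g) else 0)
      = (if ((t ∈ Tset N j) ∧ (∀ i, g i ∈ Tset N j)) ∧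
          ((∀ h : 0 < k, colGE natKey t (g ⟨0,h⟩)) ∧ Chain natKey g)
        then wrd (t :: List.ofFn g) else 0)
        + (if t = c
            then (if (∀ i, g i ∈ S') ∧ Chain natKey g
              then wrd [c] * wrd (List.ofFn g) else 0) else 0) := by
    intro t g
    by_cases htc : t = c
    · subst htc
      have hCj : ¬ (((t ∈ Tset N j) ∧ (∀ i, g i ∈ Tset N j)) ∧
          ((∀ h : 0 < k, colGE natKey t (g ⟨0,h⟩)) ∧ Chain natKey g)) := by
        intro hC
        have h1 : natKey t < j := mem_Tset.1 hC.1.1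
        omega
      rw [if_pos rfl, if_neg hCj, zero_add]
      by_cases hD : (∀ i, g i ∈ S') ∧ Chain natKey g
      · have hC : ((t ∈ Tset N (j+1)) ∧ (∀ i, g i ∈ Tset N (j+1))) ∧
            ((∀ h : 0 < k, colGE natKey t (g ⟨0,h⟩)) ∧ Chain natKey g) := by
          refine ⟨⟨mem_Tset.2 (by omega), fun i => ?_⟩, ⟨fun h => ?_, hD.2⟩⟩
          · have h2 := mem_Tset.1 (hD.1 i)
            rw [mem_Tset]
            rcases Bool.eq_false_or_eq_true t.2 with hb | hb <;>
              · rw [hb] at h2; simp at h2; omega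
          · have h0 := mem_Tset.1 (hD.1 ⟨0, h⟩)
            rcases Bool.eq_false_or_eq_true t.2 with hb | hb
            · rw [hb] at h0; simp at h0
              rcases Nat.lt_or_ge (natKey (g ⟨0,h⟩)) j with hlt | hge
              · exact Or.inl (by omega)
              · have he : natKey (g ⟨0,h⟩) = natKey t := by omega
                exact Or.inr ⟨(natKey_inj he).symm, hb⟩
            · rw [hb] at h0; simp at h0
              exact Or.inl (by omega)
        rw [if_pos hC, if_pos hD, wrd_cons]
      · have hC : ¬ (((t ∈ Tset N (j+1)) ∧ (∀ i, g i ∈ Tset N (j+1))) ∧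
            ((∀ h : 0 < k, colGE natKey t (g ⟨0,h⟩)) ∧ Chain natKey g)) := by
          intro hC
          refine hD ⟨fun i => ?_, hC.2.2⟩
          rw [hS', mem_Tset]
          rcases Bool.eq_false_or_eq_true t.2 with hb | hb
          · rw [hb]; simp only [if_pos]
            have := mem_Tset.1 (hC.1.2 i)
            simp at this ⊢
            omega
          · rw [hb]
            simp only [Bool.false_eq_true, if_false]
            have hk : 0 < k := i.pos
            have hd := hC.2.1 hk
            have hle := chain_le_head natKey hC.2.2 hk i
            have h0t : natKey (g ⟨0, hk⟩) < natKey t := by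
              rcases hd with h' | ⟨_, hbt⟩
              · exact h'
              · rw [hb] at hbt; exact absurd hbt (by simp)
            omega
        rw [if_neg hC, if_neg hD]
    · rw [if_neg htc, add_zero]
      by_cases hC : ((t ∈ Tset N j) ∧ (∀ i, g i ∈ Tset N j)) ∧
          ((∀ h : 0 < k, colGE natKey t (g ⟨0,h⟩)) ∧ Chain natKey g)
      · have hC' : ((t ∈ Tset N (j+1)) ∧ (∀ i, g i ∈ Tset N (j+1))) ∧
            ((∀ h : 0 < k, colGE natKey t (g ⟨0,h⟩)) ∧ Chain natKey g) := by
          refine ⟨⟨mem_Tset.2 ?_, fun i => mem_Tset.2 ?_⟩, hC.2⟩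
          · have := mem_Tset.1 hC.1.1; omega
          · have := mem_Tset.1 (hC.1.2 i); omega
        rw [if_pos hC, if_pos hC']
      · have hC' : ¬ (((t ∈ Tset N (j+1)) ∧ (∀ i, g i ∈ Tset N (j+1))) ∧
            ((∀ h : 0 < k, colGE natKey t (g ⟨0,h⟩)) ∧ Chain natKey g)) := by
          intro hC'
          have h1 := mem_Tset.1 hC'.1.1
          have h2 : natKey t ≠ j := fun he => htc (natKey_inj (he.trans hc.symm))
          refine hC ⟨⟨mem_Tset.2 (by omega), fun i => mem_Tset.2 ?_⟩, hC'.2⟩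
          have hk : 0 < k := i.pos
          have hd := hC'.2.1 hk
          have hle := chain_le_head natKey hC'.2.2 hk i
          have h0t : natKey (g ⟨0, hk⟩) ≤ natKey t := by
            rcases hd with h' | ⟨he, _⟩
            · omega
            · rw [he]
          omega
        rw [if_neg hC, if_neg hC']
  have step1 : (∑ t : Letter N, ∑ g : Fin k → Letter N,
      (if ((t ∈ Tset N (j+1)) ∧ (∀ i, g i ∈ Tset N (j+1))) ∧
          ((∀ h : 0 < k, colGE natKey t (g ⟨0,h⟩)) ∧ Chain natKey g)
        then wrd (t :: List.ofFn g) else 0))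
      = (∑ t : Letter N, ∑ g : Fin k → Letter N,
        (if ((t ∈ Tset N j) ∧ (∀ i, g i ∈ Tset N j)) ∧
          ((∀ h : 0 < k, colGE natKey t (g ⟨0,h⟩)) ∧ Chain natKey g)
        then wrd (t :: List.ofFn g) else 0))
      + (∑ t : Letter N,
          (if t = c then (∑ g : Fin k → Letter N,
            (if (∀ i, g i ∈ S') ∧ Chain natKey g
              then wrd [c] * wrd (List.ofFn g) else 0)) else 0)) := by
    rw [← Finset.sum_add_distrib]
    refine Finset.sum_congr rfl (fun t _ => ?_)
    have pull : (if t = c then (∑ g : Fin k → Letter N,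
            (if (∀ i, g i ∈ S') ∧ Chain natKey g
              then wrd [c] * wrd (List.ofFn g) else 0)) else 0)
        = ∑ g : Fin k → Letter N, (if t = c
            then (if (∀ i, g i ∈ S') ∧ Chain natKey g
              then wrd [c] * wrd (List.ofFn g) else 0) else 0) := by
      split_ifs <;> simp
    rw [pull, ← Finset.sum_add_distrib]
    exact Finset.sum_congr rfl (fun g _ => key_pt t g)
  rw [step1, Finset.sum_ite_eq' Finset.univ c, if_pos (Finset.mem_univ c)]


/-- quotient map -/
def qk : FA N →+* RingQuot (kronRel N) := RingQuot.mkRingHom _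

lemma qk_rel {a b : FA N} (h : kronRel N a b) : qk a = qk b := RingQuot.mkRingHom_rel h

/-- image of a letter -/
def uL (t : Letter N) : RingQuot (kronRel N) := qk (wrd [t])

lemma uL_mul (s t : Letter N) : uL s * uL t = qk (wrd [s, t]) := by
  rw [uL, uL, ← map_mul, ← wrd_append]; rfl

lemma uL_mul3 (s t r : Letter N) : uL s * uL t * uL r = qk (wrd [s, t, r]) := by
  rw [uL_mul, uL, ← map_mul, ← wrd_append]; rfl

lemma far_comm {s t : Letter N} (h : natKey s + 2 < natKey t) :
    uL s * uL t = uL t * uL s := by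
  rw [uL_mul, uL_mul]; exact qk_rel (kronRel.far s t h)

/-- commutator -/
def cq (w : Letter N) (X : RingQuot (kronRel N)) : RingQuot (kronRel N) :=
  uL w * X - X * uL w

lemma cq_one (w : Letter N) : cq w 1 = 0 := by simp [cq]

lemma cq_zero (w : Letter N) : cq w 0 = 0 := by simp [cq]

lemma cq_add (w : Letter N) (X Y : RingQuot (kronRel N)) :
    cq w (X + Y) = cq w X + cq w Y := by simp only [cq]; noncomm_ring

lemma cq_mul (w : Letter N) (X Y : RingQuot (kronRel N)) :
    cq w (X * Y) = cq w X * Y + X * cq w Y := by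
  simp only [cq, sub_mul, mul_sub, mul_assoc]
  abel

/-- `E j k` in the quotient. -/
def En (N : ℕ) (j k : ℕ) : RingQuot (kronRel N) := qk (eSet natKey (Tset N j) k)

/-- `E j (k-1)`. -/
def Ep (N : ℕ) (j : ℕ) : ℕ → RingQuot (kronRel N)
  | 0 => 0
  | (k+1) => En N j k

lemma En_zero (j : ℕ) : En N j 0 = 1 := by
  rw [En, eSet_zero, map_one]

lemma En_bot (k : ℕ) : En N 0 (k+1) = 0 := by
  rw [En, eSet_expand]
  rw [show (∑ g : Fin (k+1) → Letter N,
      if (∀ i, g i ∈ Tset N 0) ∧ Chain natKey g then wrd (List.ofFn g) else 0) = 0 from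
    Finset.sum_eq_zero (fun g _ => by
      rw [if_neg]
      rintro ⟨h1, -⟩
      exact absurd (mem_Tset.1 (h1 0)) (by omega))]
  exact map_zero _

lemma En_one (j : ℕ) :
    En N j 1 = ∑ t : Letter N, if natKey t < j then uL t else 0 := by
  rw [En, eSet_one, map_sum]
  refine Finset.sum_congr rfl (fun t _ => ?_)
  rw [apply_ite qk, map_zero]
  by_cases h : natKey t < j
  · rw [if_pos h, if_pos (mem_Tset.2 h)]; rfl
  · rw [if_neg h, if_neg (fun hh => h (mem_Tset.1 hh))]

lemma En_stable {j : ℕ} (h : 2 * N ≤ j) (k : ℕ) : En N (j+1) k = En N j k := by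
  rw [En, En]
  congr 1
  have : Tset N (j+1) = Tset N j := by
    ext y
    have := natKey_lt y
    rw [mem_Tset, mem_Tset]
    omega
  rw [this]

lemma En_recU {j : ℕ} {c : Letter N} (hc : natKey c = j) (hb : c.2 = false) (k : ℕ) :
    En N (j+1) k = En N j k + uL c * Ep N j k := by
  cases k with
  | zero => rw [En_zero, En_zero, Ep, mul_zero, add_zero]
  | succ k =>
    rw [En, En, Ep, En, eSet_rec j k c hc, map_add, map_mul, hb]
    rfl

lemma En_recB {j : ℕ} {c : Letter N} (hc : natKey c = j) (hb : c.2 = true) (k : ℕ) :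
    En N (j+1) k = En N j k + uL c * Ep N (j+1) k := by
  cases k with
  | zero => rw [En_zero, En_zero, Ep, mul_zero, add_zero]
  | succ k =>
    rw [En, En, Ep, En, eSet_rec j k c hc, map_add, map_mul, hb]
    rfl

/-- far letters commute with `En`. -/
lemma comm_word (s : Letter N) (l : List (Letter N))
    (h : ∀ t ∈ l, uL s * uL t = uL t * uL s) :
    uL s * qk (wrd l) = qk (wrd l) * uL s := by
  induction l with
  | nil => rw [wrd_nil, map_one, one_mul, mul_one]
  | cons t l ih =>
    rw [wrd_cons, map_mul]
    have h1 : uL s * qk (wrd [t]) = qk (wrd [t]) * uL s := h t List.mem_cons_self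
    rw [← mul_assoc, h1, mul_assoc, ih (fun r hr => h r (List.mem_cons_of_mem t hr)), mul_assoc]

lemma cq_En_far {j : ℕ} {w : Letter N} (hw : j + 2 ≤ natKey w) (k : ℕ) :
    cq w (En N j k) = 0 := by
  rw [cq, En, eSet_expand, map_sum, Finset.mul_sum, Finset.sum_mul, ← Finset.sum_sub_distrib]
  refine Finset.sum_eq_zero (fun g _ => ?_)
  by_cases hg : (∀ i, g i ∈ Tset N j) ∧ Chain natKey g
  · rw [if_pos hg]
    rw [comm_word w (List.ofFn g) (fun t ht => ?_), sub_self]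
    obtain ⟨i, rfl⟩ := List.mem_ofFn.1 ht
    have h1 : natKey (g i) < j := mem_Tset.1 (hg.1 i)
    exact (far_comm (by omega)).symm
  · rw [if_neg hg, map_zero, mul_zero, zero_mul, sub_self]

lemma Ep_succ (j k : ℕ) : Ep N j (k+1) = En N j k := rfl
lemma Ep_zero (j : ℕ) : Ep N j 0 = 0 := rfl
lemma Ep_one (j : ℕ) : Ep N j 1 = 1 := En_zero j

/-- `[w,c]·c = 0` for `c` unbarred below `w` (rel3b). -/
lemma annA1 {c w : Letter N} (hb : c.2 = false) (h : natKey c < natKey w) :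
    cq w (uL c) * uL c = 0 := by
  rw [cq, sub_mul, uL_mul3, uL_mul3, qk_rel (kronRel.rel3b c w hb h), sub_self]

/-- `c·[w,c] = 0` for `c` barred below `w` (rel4). -/
lemma annA2 {c w : Letter N} (hb : c.2 = true) (h : natKey c < natKey w) :
    uL c * cq w (uL c) = 0 := by
  rw [cq, mul_sub, ← mul_assoc, ← mul_assoc, uL_mul3, uL_mul3,
    qk_rel (kronRel.rel4 c w hb h), sub_self]

lemma V_sum (j : ℕ) (w : Letter N) :
    cq w (En N j 1) = ∑ t : Letter N, if natKey t < j then cq w (uL t) else 0 := by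
  rw [En_one, cq, Finset.mul_sum, Finset.sum_mul, ← Finset.sum_sub_distrib]
  refine Finset.sum_congr rfl (fun t _ => ?_)
  split_ifs with h
  · rfl
  · rw [mul_zero, zero_mul, sub_self]

/-- `c·[c,E¹] = 0` for `c` unbarred on top (rel3). -/
lemma lem_cV {j : ℕ} {c : Letter N} (hc : natKey c = j) (hb : c.2 = false) :
    uL c * cq c (En N j 1) = 0 := by
  rw [V_sum, Finset.mul_sum]
  refine Finset.sum_eq_zero (fun t _ => ?_)
  split_ifs with h
  · rw [cq, mul_sub, ← mul_assoc, ← mul_assoc, uL_mul3, uL_mul3,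
      qk_rel (kronRel.rel3 t c hb (by omega)), sub_self]
  · rw [mul_zero]

/-- `[c,E¹]·c = 0` for `c` barred on top (rel4b). -/
lemma lem_Vc {j : ℕ} {c : Letter N} (hc : natKey c = j) (hb : c.2 = true) :
    cq c (En N j 1) * uL c = 0 := by
  rw [V_sum, Finset.sum_mul]
  refine Finset.sum_eq_zero (fun t _ => ?_)
  split_ifs with h
  · rw [cq, sub_mul, uL_mul3, uL_mul3, qk_rel (kronRel.rel4b t c hb (by omega)), sub_self]
  · rw [zero_mul]

/-- `[w,E¹]` commutes with `c` when `natKey c = j`, `natKey w = j+1` (far + rot). -/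
lemma lem_Zc {j : ℕ} {c w : Letter N} (hc : natKey c = j) (hw : natKey w = j + 1) :
    cq w (En N j 1) * uL c = uL c * cq w (En N j 1) := by
  rw [V_sum, Finset.sum_mul, Finset.mul_sum]
  refine Finset.sum_congr rfl (fun t _ => ?_)
  split_ifs with h
  · rcases Nat.lt_or_ge (natKey t) (j - 1) with hlt | hge
    · have hfar : uL t * uL w = uL w * uL t := far_comm (by omega)
      rw [cq, hfar, sub_self, zero_mul, mul_zero]
    · have ht : natKey t + 1 = natKey c := by omega
      have ht2 : natKey c + 1 = natKey w := by omega
      have hrot := qk_rel (kronRel.rot t c w ht ht2)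
      rw [map_sub, map_sub] at hrot
      have h2 := congrArg Neg.neg hrot
      rw [neg_sub, neg_sub] at h2
      rw [cq, sub_mul, uL_mul3, uL_mul3, mul_sub, ← mul_assoc, ← mul_assoc,
        uL_mul3, uL_mul3]
      exact h2
  · rw [zero_mul, mul_zero]

/-- letter with a given key -/
def cLet (N : ℕ) (j : ℕ) (h : j < 2 * N) : Letter N :=
  (⟨j / 2, by omega⟩, decide (j % 2 = 1))

lemma cLet_key (j : ℕ) (h : j < 2 * N) : natKey (cLet N j h) = j := by
  unfold cLet natKey
  by_cases hp : j % 2 = 1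
  · rw [if_pos (by simp [hp])]
    dsimp only
    omega
  · rw [if_neg (by simp [hp])]
    dsimp only
    omega

/-- abstract algebra for the unbarred `P1` step -/
lemma keylemU {R : Type*} [Ring R] (X V A B a b a' : R)
    (h1 : A * X = X * A - V * a) (h2 : a * X = X * a - V * a') (h3 : X * V = 0) :
    (A + X * a) * (B + X * b)
      = A * B + X * (A * b) + X * (a * B) + X * X * (a * b) - V * (a * b) := by
  have e0 : (A + X * a) * (B + X * b)
      = A * B + (A * X) * b + X * (a * B) + X * ((a * X) * b) := by noncomm_ring
  rw [e0, h1, h2]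
  have e1 : X * ((X * a - V * a') * b)
      = X * X * (a * b) - (X * V) * (a' * b) := by noncomm_ring
  rw [e1, h3]
  noncomm_ring

theorem pkg (N : ℕ) : ∀ j : ℕ,
    (∀ k l : ℕ, En N j k * En N j l = En N j l * En N j k) ∧
    (∀ w : Letter N, natKey w = j ∨ natKey w = j + 1 →
      ∀ k : ℕ, cq w (En N j k) = cq w (En N j 1) * Ep N j k) := by
  intro j
  induction j with
  | zero =>
    constructor
    · intro k l
      cases k with
      | zero => simp only [En_zero, one_mul, mul_one]
      | succ k =>
        cases l with
        | zero => simp only [En_zero, one_mul, mul_one]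
        | succ l => rw [En_bot, En_bot]
    · intro w _ k
      cases k with
      | zero => rw [En_zero, cq_one, Ep_zero, mul_zero]
      | succ k =>
        rw [En_bot, show En N 0 1 = 0 from En_bot 0, cq_zero, zero_mul]
  | succ j ih =>
    by_cases hj : j < 2 * N
    case neg =>
      have hs : ∀ k, En N (j+1) k = En N j k := En_stable (by omega)
      constructor
      · intro k l; rw [hs, hs]; exact ih.1 k l
      · intro w hw
        exfalso
        have := natKey_lt w
        omega
    case pos =>
    have hc : natKey (cLet N j hj) = j := cLet_key j hj
    set c := cLet N j hj with hcdef
    rcases Bool.eq_false_or_eq_true c.2 with hbc | hbc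
    -- ===================== CASE B : c barred =====================
    · have hP2c : ∀ a, cq c (En N j a) = cq c (En N j 1) * Ep N j a :=
        fun a => ih.2 c (Or.inl hc) a
      have hS : ∀ a, En N j a * uL c
          = uL c * En N j a - cq c (En N j 1) * Ep N j a := by
        intro a
        have h := hP2c a
        rw [cq] at h
        rw [← h]; abel
      have hVc : cq c (En N j 1) * uL c = 0 := lem_Vc hc hbc
      have hrecB : ∀ a, En N (j+1) a = En N j a + uL c * Ep N (j+1) a := En_recB hc hbc
      -- the K lemma
      have hK : ∀ s : ℕ, ∀ a b : ℕ, a + b ≤ s → ∀ X : RingQuot (kronRel N),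
          X * uL c = 0 →
          X * (En N j a * En N (j+1) b - En N j b * En N (j+1) a) = 0 := by
        intro s
        induction s with
        | zero =>
          intro a b hab X hX
          obtain rfl : a = 0 := by omega
          obtain rfl : b = 0 := by omega
          rw [sub_self, mul_zero]
        | succ s ihs =>
          intro a b hab X hX
          cases a with
          | zero =>
            simp only [En_zero, one_mul, mul_one]
            have hfe : En N (j+1) b - En N j b = uL c * Ep N (j+1) b := by
              rw [hrecB b]; abel
            rw [hfe, ← mul_assoc, hX, zero_mul]
          | succ a =>
            cases b with
            | zero =>
              simp only [En_zero, one_mul, mul_one]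
              rw [mul_sub, hrecB (a+1), mul_add, ← mul_assoc, hX, zero_mul, add_zero,
                sub_self]
            | succ b =>
              have hx : En N j (a+1) * En N (j+1) (b+1) - En N j (b+1) * En N (j+1) (a+1)
                  = (En N j (a+1) * En N j (b+1) - En N j (b+1) * En N j (a+1))
                    + uL c * (En N j (a+1) * En N (j+1) b - En N j (b+1) * En N (j+1) a)
                    - cq c (En N j 1) *
                      (En N j a * En N (j+1) b - En N j b * En N (j+1) a) := by
                rw [hrecB (b+1), hrecB (a+1)]
                have h1 := hS (a+1); have h2 := hS (b+1)
                rw [Ep_succ] at h1 h2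
                simp only [mul_add, ← mul_assoc]
                rw [h1, h2]
                simp only [Ep_succ, mul_sub, sub_mul, ← mul_assoc]
                abel
              rw [hx, ih.1 (a+1) (b+1), sub_self, zero_add, mul_sub, ← mul_assoc, hX,
                zero_mul, zero_sub, ← mul_assoc]
              have hXV : (X * cq c (En N j 1)) * uL c = 0 := by
                rw [mul_assoc, hVc, mul_zero]
              rw [ihs a b (by omega) _ hXV, neg_zero]
      -- the G lemma
      have hG : ∀ k l : ℕ, En N j k * En N (j+1) l - En N j l * En N (j+1) k
          = uL c * (En N j k * Ep N (j+1) l - En N j l * Ep N (j+1) k) := by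
        intro k l
        cases k with
        | zero =>
          simp only [En_zero, Ep_zero, one_mul, mul_one, mul_zero, sub_zero]
          rw [hrecB l]; abel
        | succ k =>
          cases l with
          | zero =>
            simp only [En_zero, Ep_zero, one_mul, mul_one, mul_zero]
            rw [hrecB (k+1), mul_sub, mul_zero]
            abel
          | succ l =>
            have hx : En N j (k+1) * En N (j+1) (l+1) - En N j (l+1) * En N (j+1) (k+1)
                = (En N j (k+1) * En N j (l+1) - En N j (l+1) * En N j (k+1))
                  + uL c * (En N j (k+1) * En N (j+1) l - En N j (l+1) * En N (j+1) k)
                  - cq c (En N j 1) *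
                    (En N j k * En N (j+1) l - En N j l * En N (j+1) k) := by
              rw [hrecB (l+1), hrecB (k+1)]
              have h1 := hS (k+1); have h2 := hS (l+1)
              rw [Ep_succ] at h1 h2
              simp only [mul_add, ← mul_assoc]
              rw [h1, h2]
              simp only [Ep_succ, mul_sub, sub_mul, ← mul_assoc]
              abel
            rw [hx, ih.1 (k+1) (l+1), sub_self, zero_add,
              hK (k + l) k l le_rfl _ hVc, sub_zero]
            rfl
      -- P1 at level j+1
      have hcomm : ∀ s : ℕ, ∀ k l : ℕ, k + l ≤ s →
          En N (j+1) k * En N (j+1) l = En N (j+1) l * En N (j+1) k := by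
        intro s
        induction s with
        | zero =>
          intro k l hkl
          obtain rfl : k = 0 := by omega
          obtain rfl : l = 0 := by omega
          rfl
        | succ s ihs =>
          intro k l hkl
          cases k with
          | zero => simp only [En_zero, one_mul, mul_one]
          | succ k =>
            cases l with
            | zero => simp only [En_zero, one_mul, mul_one]
            | succ l =>
              have hExp : ∀ a b : ℕ, a + b + 1 ≤ s →
                  En N (j+1) (a+1) * En N (j+1) (b+1)
                    = En N j (a+1) * En N (j+1) (b+1)
                      + uL c * (En N j (b+1) * En N (j+1) a)
                      + uL c * uL c * (En N (j+1) a * En N (j+1) b) := by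
                intro a b hab
                calc En N (j+1) (a+1) * En N (j+1) (b+1)
                    = En N j (a+1) * En N (j+1) (b+1)
                      + uL c * (En N (j+1) a * En N (j+1) (b+1)) := by
                      rw [hrecB (a+1), Ep_succ]
                      simp only [add_mul, mul_assoc]
                  _ = En N j (a+1) * En N (j+1) (b+1)
                      + uL c * (En N (j+1) (b+1) * En N (j+1) a) := by
                      rw [ihs a (b+1) (by omega)]
                  _ = _ := by
                      rw [hrecB (b+1), Ep_succ]
                      simp only [add_mul, mul_add, mul_assoc]
                      rw [ihs b a (by omega)]
                      abel
              rw [hExp k l (by omega), hExp l k (by omega)]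
              have hg := hG (k+1) (l+1)
              rw [Ep_succ, Ep_succ, mul_sub] at hg
              have hgoal : En N j (k+1) * En N (j+1) (l+1)
                    + uL c * (En N j (l+1) * En N (j+1) k)
                  = En N j (l+1) * En N (j+1) (k+1)
                    + uL c * (En N j (k+1) * En N (j+1) l) := by
                have h2 := sub_eq_sub_iff_add_eq_add.mp hg
                rw [h2]
                abel
              rw [ihs k l (by omega)]
              rw [hgoal]
      constructor
      · exact fun k l => hcomm (k + l) k l le_rfl
      · -- P2 at level j+1
        intro w hw k
        have hWc2 : uL c * cq w (uL c) = 0 :=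
          annA2 hbc (by rcases hw with h | h <;> omega)
        rcases hw with hw1 | hw2
        · have hZ : ∀ a, cq w (En N j a) = cq w (En N j 1) * Ep N j a :=
            fun a => ih.2 w (Or.inr hw1) a
          have hZc : cq w (En N j 1) * uL c = uL c * cq w (En N j 1) := lem_Zc hc hw1
          have hH : ∀ k : ℕ, cq w (En N (j+1) (k+1))
              = (cq w (En N j 1) + cq w (uL c)) * En N (j+1) k := by
            intro k
            induction k with
            | zero =>
              rw [hrecB 1, Ep_one, mul_one, cq_add, En_zero, mul_one]
            | succ k ihk =>
              rw [hrecB (k+2), Ep_succ, cq_add, cq_mul, ihk, hZ (k+2), Ep_succ]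
              calc cq w (En N j 1) * En N j (k+1)
                    + (cq w (uL c) * En N (j+1) (k+1)
                      + uL c * ((cq w (En N j 1) + cq w (uL c)) * En N (j+1) k))
                  = cq w (En N j 1) * En N j (k+1)
                    + cq w (uL c) * En N (j+1) (k+1)
                    + (uL c * cq w (En N j 1)) * En N (j+1) k
                    + (uL c * cq w (uL c)) * En N (j+1) k := by
                    simp only [add_mul, mul_add, ← mul_assoc]
                    abel
                _ = cq w (En N j 1) * (En N j (k+1) + uL c * En N (j+1) k)
                    + cq w (uL c) * En N (j+1) (k+1) := by
                    rw [← hZc, hWc2, zero_mul, add_zero]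
                    simp only [mul_add, ← mul_assoc]
                    abel
                _ = _ := by
                    have hb1 : En N (j+1) (k+1) = En N j (k+1) + uL c * En N (j+1) k :=
                      hrecB (k+1)
                    rw [← hb1, add_mul]
          cases k with
          | zero => rw [En_zero, cq_one, Ep_zero, mul_zero]
          | succ k =>
            rw [hH k, Ep_succ]
            congr 1
            rw [show En N (j+1) 1 = En N (j+1) (0+1) from rfl, hH 0, En_zero, mul_one]
        · have hZ0 : ∀ a, cq w (En N j a) = 0 := fun a => cq_En_far (by omega) a
          have hH : ∀ k : ℕ, cq w (En N (j+1) (k+1)) = cq w (uL c) * En N (j+1) k := by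
            intro k
            induction k with
            | zero =>
              rw [hrecB 1, Ep_one, mul_one, cq_add, hZ0 1, zero_add, En_zero, mul_one]
            | succ k ihk =>
              rw [hrecB (k+2), Ep_succ, cq_add, cq_mul, ihk, hZ0 (k+2), zero_add,
                ← mul_assoc, hWc2, zero_mul, add_zero]
          cases k with
          | zero => rw [En_zero, cq_one, Ep_zero, mul_zero]
          | succ k =>
            rw [hH k, Ep_succ]
            congr 1
            rw [show En N (j+1) 1 = En N (j+1) (0+1) from rfl, hH 0, En_zero, mul_one]
    -- ===================== CASE U : c unbarred =====================
    · have hP2c : ∀ a, cq c (En N j a) = cq c (En N j 1) * Ep N j a :=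
        fun a => ih.2 c (Or.inl hc) a
      have hS : ∀ a, En N j a * uL c
          = uL c * En N j a - cq c (En N j 1) * Ep N j a := by
        intro a
        have h := hP2c a
        rw [cq] at h
        rw [← h]; abel
      have hcV : uL c * cq c (En N j 1) = 0 := lem_cV hc hbc
      have hrec : ∀ a, En N (j+1) a = En N j a + uL c * Ep N j a := En_recU hc hbc
      constructor
      · -- P1
        intro k l
        cases k with
        | zero => simp only [En_zero, one_mul, mul_one]
        | succ k =>
          cases l with
          | zero => simp only [En_zero, one_mul, mul_one]
          | succ l =>
            have hfm : ∀ a b : ℕ, En N (j+1) (a+1) * En N (j+1) (b+1) =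
                En N j (a+1) * En N j (b+1) + uL c * (En N j (a+1) * En N j b)
                  + uL c * (En N j a * En N j (b+1))
                  + uL c * uL c * (En N j a * En N j b)
                  - cq c (En N j 1) * (En N j a * En N j b) := by
              intro a b
              rw [hrec (a+1), hrec (b+1), Ep_succ, Ep_succ]
              exact keylemU (uL c) (cq c (En N j 1)) (En N j (a+1)) (En N j (b+1))
                (En N j a) (En N j b) (Ep N j a)
                (by rw [hS (a+1), Ep_succ]) (hS a) hcV
            rw [hfm k l, hfm l k, ih.1 (k+1) (l+1), ih.1 (k+1) l, ih.1 k (l+1), ih.1 k l]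
            abel
      · -- P2
        intro w hw k
        have hWc : cq w (uL c) * uL c = 0 :=
          annA1 hbc (by rcases hw with h | h <;> omega)
        cases k with
        | zero => rw [En_zero, cq_one, Ep_zero, mul_zero]
        | succ k =>
          have hF1 : cq w (En N (j+1) 1) = cq w (En N j 1) + cq w (uL c) := by
            rw [hrec 1, Ep_one, mul_one, cq_add]
          rcases hw with hw1 | hw2
          · have hZ : ∀ a, cq w (En N j a) = cq w (En N j 1) * Ep N j a :=
              fun a => ih.2 w (Or.inr hw1) a
            have hZc : cq w (En N j 1) * uL c = uL c * cq w (En N j 1) := lem_Zc hc hw1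
            rw [Ep_succ, hrec (k+1), Ep_succ, cq_add, cq_mul, hZ (k+1), Ep_succ, hZ k,
              hF1, hrec k]
            have expand : (cq w (En N j 1) + cq w (uL c)) * (En N j k + uL c * Ep N j k)
                = cq w (En N j 1) * En N j k + cq w (uL c) * En N j k
                  + (cq w (En N j 1) * uL c) * Ep N j k
                  + (cq w (uL c) * uL c) * Ep N j k := by
                simp only [add_mul, mul_add, ← mul_assoc]
                abel
            rw [expand, hZc, hWc, zero_mul, add_zero]
            simp only [← mul_assoc]
            abel
          · have hZ0 : ∀ a, cq w (En N j a) = 0 := fun a => cq_En_far (by omega) a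
            rw [Ep_succ, hrec (k+1), Ep_succ, cq_add, cq_mul, hZ0 (k+1), hZ0 k, mul_zero,
              add_zero, zero_add, hF1, hZ0 1, zero_add, hrec k]
            have expand : cq w (uL c) * (En N j k + uL c * Ep N j k)
                = cq w (uL c) * En N j k + (cq w (uL c) * uL c) * Ep N j k := by
                simp only [mul_add, ← mul_assoc]
            rw [expand, hWc, zero_mul, add_zero]

/-- For `m ∈ [N-1]`, `x = m+1` (unbarred), and `A_{≤m̄}` the
letters at most `m̄` in the natural order,
`J_{(a,a)}(m̄ |x| m̄) = x · J_{(a,a)}(m̄, m̄)` in `U/I_Kron`. -/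
theorem J_two_column_insert (N : ℕ) (m : Fin N) (hm : (m : ℕ) + 1 < N) (a : ℕ) :
    let x : Letter N := (⟨(m : ℕ) + 1, hm⟩, false)
    let S : Set (Letter N) := {y | natKey y ≤ natKey ((m, true) : Letter N)}
    RingQuot.mkRingHom (kronRel N)
        (eSetZ natKey S (a : ℤ) * wrd [x] * eSetZ natKey S (a : ℤ) -
          eSetZ natKey S ((a : ℤ) + 1) * wrd [x] * eSetZ natKey S ((a : ℤ) - 1)) =
      RingQuot.mkRingHom (kronRel N)
        (wrd [x] *
          (eSetZ natKey S (a : ℤ) * eSetZ natKey S (a : ℤ) -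
            eSetZ natKey S ((a : ℤ) + 1) * eSetZ natKey S ((a : ℤ) - 1))) := by
  intro x S
  have hm1 : natKey ((m, true) : Letter N) = 2*(m:ℕ)+1 := by
    show 2*(m:ℕ) + (if true then 1 else 0) = _
    simp
  have hS : S = Tset N (2*(m:ℕ)+1+1) := by
    ext y
    show natKey y ≤ natKey ((m, true) : Letter N) ↔ natKey y < 2*(m:ℕ)+1+1
    rw [hm1]
    omega
  have hx : natKey x = 2*(m:ℕ)+1+1 := by
    show 2*((m:ℕ)+1) + (if false then 1 else 0) = _
    simp
    omega
  set j : ℕ := 2*(m:ℕ)+1+1 with hjdef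
  have hP1 := (pkg N j).1
  have hP2 := (pkg N j).2 x (Or.inl hx)
  have hst : ∀ k : ℕ, En N j k * uL x = uL x * En N j k - cq x (En N j 1) * Ep N j k := by
    intro k
    have h := hP2 k
    rw [cq] at h
    rw [← h]; abel
  have cz0 : eSetZ natKey S ((a:ℕ):ℤ) = eSet natKey (Tset N j) a := by
    rw [eSetZ, if_pos (Int.natCast_nonneg a), hS]
    simp
  have cz1 : eSetZ natKey S ((a:ℤ)+1) = eSet natKey (Tset N j) (a+1) := by
    rw [eSetZ, if_pos (by positivity), hS]
    have hh : ((a:ℤ)+1).toNat = a + 1 := by omega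
    rw [hh]
  cases a with
  | zero =>
    have cz2 : eSetZ natKey S (((0:ℕ):ℤ) - 1) = 0 := by
      rw [eSetZ, if_neg (by norm_num)]
    rw [cz0, cz1, cz2, eSet_zero]
    simp only [one_mul, mul_one, mul_zero, sub_zero]
  | succ a' =>
    have cz2 : eSetZ natKey S (((a'+1:ℕ):ℤ) - 1) = eSet natKey (Tset N j) a' := by
      rw [eSetZ, if_pos (by omega), hS]
      have hh : (((a'+1:ℕ):ℤ) - 1).toNat = a' := by omega
      rw [hh]
    rw [cz0, cz1, cz2, map_sub, map_mul, map_mul, map_mul, map_mul, map_mul, map_sub,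
      map_mul, map_mul]
    change En N j (a'+1) * uL x * En N j (a'+1) - En N j (a'+1+1) * uL x * En N j a'
      = uL x * (En N j (a'+1) * En N j (a'+1) - En N j (a'+1+1) * En N j a')
    have h1 : En N j (a'+1) * uL x
        = uL x * En N j (a'+1) - cq x (En N j 1) * En N j a' := by
      have h := hst (a'+1); rwa [Ep_succ] at h
    have h2 : En N j (a'+1+1) * uL x
        = uL x * En N j (a'+1+1) - cq x (En N j 1) * En N j (a'+1) := by
      have h := hst (a'+1+1); rwa [Ep_succ] at h
    rw [h1, h2]
    simp only [sub_mul, mul_sub, mul_assoc]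
    rw [hP1 a' (a'+1)]
    abel


end NCS
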